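/- Let D be a dendrite. If the set End(D) of endpoints of D is dense in D, then End(D) is a residual subset of D (i.e., End(D) contains a countable intersection of dense open subsets of D; equivalently its complement is meagre). -/

import Mathlib

open Set Topology Filter TopologicalSpace

/-- A dendrite: a nondegenerate continuum in which any two distinct points can be
separated by a third point. -/
def IsDendrite (X : Type*) [TopologicalSpace X] : Prop :=
  Nontrivial X ∧ ∀ x y : X, x ≠ y → ∃ z : X, z ≠ x ∧ z ≠ y ∧
    connectedComponentIn ({z}ᶜ : Set X) x ≠ connectedComponentIn ({z}ᶜ : Set X) y

/-- `p` is an endpoint of `X` if `X \ {p}` is connected. -/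
def IsEndpointOf (X : Type*) [TopologicalSpace X] (p : X) : Prop :=
  IsPreconnected ({p}ᶜ : Set X)

/-- A periodic point of `f`. -/
def IsPeriodic {X : Type*} (f : X → X) (x : X) : Prop :=
  ∃ n : ℕ, 1 ≤ n ∧ f^[n] x = x

/-- `x` has dense forward orbit under `f`. -/
def HasDenseOrbit {X : Type*} [TopologicalSpace X] (f : X → X) (x : X) : Prop :=
  Dense {y : X | ∃ n : ℕ, 1 ≤ n ∧ f^[n] x = y}

/-- Topological transitivity. -/
def TopTransitive {X : Type*} [TopologicalSpace X] (f : X → X) : Prop :=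
  ∀ U V : Set X, IsOpen U → IsOpen V → U.Nonempty → V.Nonempty →
    ∃ n : ℕ, 0 < n ∧ (f^[n] '' U ∩ V).Nonempty

/-- Total transitivity: every iterate is transitive. -/
def TotallyTransitive {X : Type*} [TopologicalSpace X] (f : X → X) : Prop :=
  ∀ n : ℕ, 1 ≤ n → TopTransitive (f^[n])

/-- Weak mixing: `f × f` is transitive. -/
def WeaklyMixing {X : Type*} [TopologicalSpace X] (f : X → X) : Prop :=
  TopTransitive (Prod.map f f)

/-- Topological mixing. -/
def TopMixing {X : Type*} [TopologicalSpace X] (f : X → X) : Prop :=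
  ∀ U V : Set X, IsOpen U → IsOpen V → U.Nonempty → V.Nonempty →
    ∃ N : ℕ, ∀ n, N ≤ n → (f^[n] '' U ∩ V).Nonempty

/-- Exactness. -/
def TopExact {X : Type*} [TopologicalSpace X] (f : X → X) : Prop :=
  ∀ U : Set X, IsOpen U → U.Nonempty → ∃ N : ℕ, 0 < N ∧ f^[N] '' U = Set.univ

/-- `A` is an arc with endpoints `a` and `b`. -/
def IsArcEnds {X : Type*} [TopologicalSpace X] (A : Set X) (a b : X) : Prop :=
  ∃ e : (Set.Icc (0:ℝ) 1) ≃ₜ A,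
    (e ⟨0, by norm_num⟩ : X) = a ∧ (e ⟨1, by norm_num⟩ : X) = b

/-- `A` is a free arc with endpoints `a` and `b`. -/
def IsFreeArc {X : Type*} [TopologicalSpace X] (A : Set X) (a b : X) : Prop :=
  IsArcEnds A a b ∧ IsOpen (A \ {a, b})

/-- A regular periodic decomposition of length `m` for `f`. -/
def IsRegPerDecomp {X : Type*} [TopologicalSpace X] (f : X → X) (m : ℕ)
    (Ds : ZMod m → Set X) : Prop :=
  0 < m ∧ (∀ i, Ds i = closure (interior (Ds i))) ∧ (⋃ i, Ds i) = Set.univ ∧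
    (∀ i, f '' Ds i = Ds (i + 1)) ∧ (∀ i j, i ≠ j → IsNowhereDense (Ds i ∩ Ds j))

/-- `f` admits a terminal (maximal-length) regular periodic decomposition. -/
def HasTerminalDecomp {X : Type*} [TopologicalSpace X] (f : X → X) : Prop :=
  ∃ (m : ℕ) (Ds : ZMod m → Set X), IsRegPerDecomp f m Ds ∧
    ∀ (m' : ℕ) (Ds' : ZMod m' → Set X), IsRegPerDecomp f m' Ds' → m' ≤ m

/-- The induced map on the hyperspace of nonempty closed (= compact) subsets. -/
def hyperMap {X : Type*} [TopologicalSpace X] {f : X → X} (hf : Continuous f) :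
    NonemptyCompacts X → NonemptyCompacts X :=
  fun A => ⟨⟨f '' A, A.isCompact.image hf⟩, A.nonempty.image f⟩

/-- The set of connected components of `X \ {p}`. -/
def componentsAt (X : Type*) [TopologicalSpace X] (p : X) : Set (Set X) :=
  {C | ∃ x : X, x ≠ p ∧ C = connectedComponentIn ({p}ᶜ : Set X) x}


/-! ### Auxiliary development for `stmt0`. -/

section DendriteAux

open Metric EMetric
open scoped ENNReal NNReal

set_option linter.unusedSectionVars false

/-- The set of `δ`-fat cut points: points whose removal disconnects the space into two open
pieces both reaching distance at least `δ` from the cut point. -/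
def fatCut (X : Type*) [MetricSpace X] (δ : ℝ) : Set X :=
  {w | ∃ U V : Set X, IsOpen U ∧ IsOpen V ∧ U ∩ V = ∅ ∧ U ∪ V = {w}ᶜ ∧
    (∃ a ∈ U, δ ≤ dist a w) ∧ (∃ b ∈ V, δ ≤ dist b w)}

/-- Components of the complement of a point are closed in that complement. -/
lemma closure_connectedComponentIn_subset {Y : Type*} [TopologicalSpace Y] (z y : Y) :
    closure (connectedComponentIn ({z}ᶜ : Set Y) y)
      ⊆ connectedComponentIn ({z}ᶜ : Set Y) y ∪ {z} := by
  by_cases hy : y ∈ ({z}ᶜ : Set Y)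
  · intro t ht
    by_cases htz : t = z
    · exact Or.inr htz
    refine Or.inl ?_
    rw [connectedComponentIn_eq_image hy] at ht ⊢
    have h2 : (⟨t, htz⟩ : ({z}ᶜ : Set Y)) ∈
        closure (connectedComponent (⟨y, hy⟩ : ({z}ᶜ : Set Y))) := by
      rw [IsInducing.subtypeVal.closure_eq_preimage_closure_image]
      exact ht
    rw [isClosed_connectedComponent.closure_eq] at h2
    exact ⟨_, h2, rfl⟩
  · rw [connectedComponentIn_eq_empty hy]
    simp

variable {X : Type*} [MetricSpace X] [CompactSpace X] [ConnectedSpace X]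

/-- Boundary bumping: `z` lies in the closure of every component of `{z}ᶜ`. -/
lemma mem_closure_connectedComponentIn {z x : X} (hxz : x ≠ z) :
    z ∈ closure (connectedComponentIn ({z}ᶜ : Set X) x) := by
  by_contra hzc
  have hxO : x ∈ ({z}ᶜ : Set X) := hxz
  set C := connectedComponentIn ({z}ᶜ : Set X) x with hC
  have hCsub : C ⊆ ({z}ᶜ : Set X) := connectedComponentIn_subset _ _
  have hxC : x ∈ C := mem_connectedComponentIn hxO
  have hCcl : IsClosed C := by
    rw [← closure_subset_iff_isClosed]
    intro t ht
    rcases closure_connectedComponentIn_subset z x ht with h | h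
    · exact h
    · rw [mem_singleton_iff] at h
      exact absurd (h ▸ ht) hzc
  have hzC : z ∉ C := fun h => hCsub h rfl
  have hdpos : 0 < infDist z C := by
    rw [← hCcl.notMem_iff_infDist_pos ⟨x, hxC⟩]
    exact hzC
  set r : ℝ := infDist z C / 3 with hr
  have hrpos : 0 < r := by positivity
  set Kc : Set X := {y | r ≤ dist y z} with hKc
  have hKccl : IsClosed Kc := isClosed_le continuous_const (continuous_id.dist continuous_const)
  have hKcO : Kc ⊆ ({z}ᶜ : Set X) := by
    intro y hy hmem
    rw [mem_singleton_iff] at hmem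
    subst hmem
    simp only [hKc, mem_setOf_eq, dist_self] at hy
    linarith
  have hCKc : C ⊆ Kc := by
    intro y hy
    have h1 : infDist z C ≤ dist z y := infDist_le_dist_of_mem hy
    show r ≤ dist y z
    rw [dist_comm]
    linarith
  have hxKc : x ∈ Kc := hCKc hxC
  have hCeq : C = connectedComponentIn Kc x := by
    apply Subset.antisymm
    · exact isPreconnected_connectedComponentIn.subset_connectedComponentIn hxC hCKc
    · exact isPreconnected_connectedComponentIn.subset_connectedComponentIn
        (mem_connectedComponentIn hxKc) ((connectedComponentIn_subset _ _).trans hKcO)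
  haveI : CompactSpace Kc := isCompact_iff_compactSpace.mp hKccl.isCompact
  set x' : Kc := ⟨x, hxKc⟩ with hx'
  have himg : C = Subtype.val '' connectedComponent x' := by
    rw [hCeq, connectedComponentIn_eq_image hxKc]
  set Sig : Set Kc := {w | dist (w : X) z ≤ 2 * r} with hSig
  have hSigcl : IsClosed Sig :=
    isClosed_le ((continuous_subtype_val.dist continuous_const)) continuous_const
  have hdisj : connectedComponent x' ∩ Sig = ∅ := by
    rw [eq_empty_iff_forall_notMem]
    rintro w ⟨hw1, hw2⟩
    have hwC : (w : X) ∈ C := himg ▸ ⟨w, hw1, rfl⟩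
    have h1 : infDist z C ≤ dist z (w : X) := infDist_le_dist_of_mem hwC
    rw [dist_comm] at h1
    have hw2' : dist (w : X) z ≤ 2 * r := hw2
    rw [hr] at *
    linarith
  have hex : ∃ Z : Set Kc, IsClopen Z ∧ x' ∈ Z ∧ Z ∩ Sig = ∅ := by
    by_contra hcon
    push_neg at hcon
    have hne : ∀ i : {s : Set Kc // IsClopen s ∧ x' ∈ s}, ((i : Set Kc) ∩ Sig).Nonempty := by
      rintro ⟨s, hs1, hs2⟩
      exact hcon s hs1 hs2
    have hdir : Directed (· ⊇ ·)
        (fun i : {s : Set Kc // IsClopen s ∧ x' ∈ s} => (i : Set Kc) ∩ Sig) := by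
      rintro ⟨s, hs, hxs⟩ ⟨t, ht, hxt⟩
      exact ⟨⟨s ∩ t, hs.inter ht, ⟨hxs, hxt⟩⟩,
        fun u hu => ⟨hu.1.1, hu.2⟩, fun u hu => ⟨hu.1.2, hu.2⟩⟩
    haveI : Nonempty {s : Set Kc // IsClopen s ∧ x' ∈ s} :=
      ⟨⟨univ, isClopen_univ, mem_univ _⟩⟩
    have hinter := IsCompact.nonempty_iInter_of_directed_nonempty_isCompact_isClosed
      (fun i : {s : Set Kc // IsClopen s ∧ x' ∈ s} => (i : Set Kc) ∩ Sig) hdir hne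
      (fun i => (i.2.1.1.inter hSigcl).isCompact) (fun i => i.2.1.1.inter hSigcl)
    obtain ⟨w, hw⟩ := hinter
    rw [mem_iInter] at hw
    have hwc : w ∈ connectedComponent x' ∩ Sig := by
      constructor
      · rw [connectedComponent_eq_iInter_isClopen x', mem_iInter]
        intro i
        exact (hw i).1
      · exact (hw ⟨univ, isClopen_univ, mem_univ _⟩).2
    rw [hdisj] at hwc
    exact hwc
  obtain ⟨Z₀, hZc, hxZ, hZSig⟩ := hex
  set Γ : Set X := Subtype.val '' Z₀ with hΓ
  have hΓcl : IsClosed Γ := ((hZc.1.isCompact).image continuous_subtype_val).isClosed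
  have hΓKc : Γ ⊆ Kc := by
    rintro t ⟨w, hw, rfl⟩
    exact w.2
  have hΓW : Γ ⊆ {y : X | 2 * r < dist y z} := by
    rintro t ⟨w, hw, rfl⟩
    show 2 * r < dist (w : X) z
    by_contra hle
    push_neg at hle
    have hmem : w ∈ Z₀ ∩ Sig := ⟨hw, hle⟩
    rw [hZSig] at hmem
    exact hmem
  have hΓop : IsOpen Γ := by
    obtain ⟨G, hG, hGeq⟩ := isOpen_induced_iff.mp hZc.2
    have hΓeq : Γ = G ∩ {y : X | 2 * r < dist y z} := by
      apply Subset.antisymm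
      · rintro t ⟨w, hw, rfl⟩
        refine ⟨?_, hΓW ⟨w, hw, rfl⟩⟩
        rw [← hGeq] at hw
        exact hw
      · rintro t ⟨htG, htW⟩
        have htK : t ∈ Kc := by
          have : (2 : ℝ) * r < dist t z := htW
          show r ≤ dist t z
          linarith
        refine ⟨⟨t, htK⟩, ?_, rfl⟩
        rw [← hGeq]
        exact htG
    rw [hΓeq]
    exact hG.inter (isOpen_lt continuous_const (continuous_id.dist continuous_const))
  have hclopen : IsClopen Γ := ⟨hΓcl, hΓop⟩
  rcases isClopen_iff.mp hclopen with h | h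
  · have : x ∈ Γ := ⟨x', hxZ, rfl⟩
    rw [h] at this
    exact this
  · have hzΓ : z ∈ Γ := h ▸ mem_univ z
    have := hΓKc hzΓ
    simp only [hKc, mem_setOf_eq, dist_self] at this
    linarith

/-- Under the separation axiom, no point `x ≠ z` is approximated by points from
components of `{z}ᶜ` avoiding any prescribed single component. -/
lemma no_comp_cluster
    (hsep : ∀ x y : X, x ≠ y → ∃ z : X, z ≠ x ∧ z ≠ y ∧
      connectedComponentIn ({z}ᶜ : Set X) x ≠ connectedComponentIn ({z}ᶜ : Set X) y)
    {z x : X} (hxz : x ≠ z)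
    (H : ∀ C : Set X,
      x ∈ closure {y : X | y ≠ z ∧ connectedComponentIn ({z}ᶜ : Set X) y ≠ C}) :
    False := by
  obtain ⟨s, hsx, hsz, hscomp⟩ := hsep x z hxz
  have key : {y : X | y ≠ z ∧ connectedComponentIn ({z}ᶜ : Set X) y ≠
        connectedComponentIn ({z}ᶜ : Set X) s}
      ⊆ connectedComponentIn ({s}ᶜ : Set X) z := by
    rintro y ⟨hyz, hyC⟩
    have hyO : y ∈ ({z}ᶜ : Set X) := hyz
    have hzcl : z ∈ closure (connectedComponentIn ({z}ᶜ : Set X) y) :=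
      mem_closure_connectedComponentIn hyz
    have hscl : s ∉ closure (connectedComponentIn ({z}ᶜ : Set X) y) := by
      intro hs
      rcases closure_connectedComponentIn_subset z y hs with h | h
      · exact hyC (connectedComponentIn_eq h)
      · exact hsz (mem_singleton_iff.mp h)
    have hsub : closure (connectedComponentIn ({z}ᶜ : Set X) y) ⊆ ({s}ᶜ : Set X) := by
      intro t ht h2
      rw [mem_singleton_iff] at h2
      exact hscl (h2 ▸ ht)
    have hfin : closure (connectedComponentIn ({z}ᶜ : Set X) y)
        ⊆ connectedComponentIn ({s}ᶜ : Set X) z :=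
      isPreconnected_connectedComponentIn.closure.subset_connectedComponentIn hzcl hsub
    exact hfin (subset_closure (mem_connectedComponentIn hyO))
  have hx2 : x ∈ connectedComponentIn ({s}ᶜ : Set X) z := by
    have hxcl : x ∈ closure (connectedComponentIn ({s}ᶜ : Set X) z) :=
      closure_mono key (H _)
    rcases closure_connectedComponentIn_subset s z hxcl with h | h
    · exact h
    · exact absurd (mem_singleton_iff.mp h).symm hsx
  exact hscomp (connectedComponentIn_eq hx2).symm

/-- Each side of a cut, together with the cut point, is preconnected. -/
lemma isPreconnected_compl_side {w : X} {U V : Set X} (hU : IsOpen U) (hV : IsOpen V)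
    (hdisj : U ∩ V = ∅) (hcover : U ∪ V = {w}ᶜ) : IsPreconnected (Vᶜ : Set X) := by
  have hwV : w ∉ V := fun hw => by
    have : w ∈ ({w}ᶜ : Set X) := hcover ▸ Or.inr hw
    exact this rfl
  have hwU : w ∉ U := fun hw => by
    have : w ∈ ({w}ᶜ : Set X) := hcover ▸ Or.inl hw
    exact this rfl
  rw [isPreconnected_iff_subset_of_fully_disjoint_closed (isClosed_compl_iff.mpr hV)]
  intro c1 c2 h1cl h2cl hsub hdisj2
  have hwVc : w ∈ (Vᶜ : Set X) := hwV
  have key : ∀ ca cb : Set X, IsClosed ca → IsClosed cb → Vᶜ ⊆ ca ∪ cb → Disjoint ca cb →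
      w ∈ ca → Vᶜ ⊆ ca := by
    intro ca cb hacl hbcl habsub hab hwa
    have hM : cb ∩ Vᶜ = U ∩ caᶜ := by
      apply Subset.antisymm
      · rintro t ⟨htb, htV⟩
        have htw : t ≠ w := fun h => hab.ne_of_mem (h ▸ hwa) htb rfl
        have htO : t ∈ U ∪ V := by
          rw [hcover]
          exact htw
        rcases htO with h | h
        · exact ⟨h, fun hta => hab.ne_of_mem hta htb rfl⟩
        · exact absurd h htV
      · rintro t ⟨htU, hta⟩
        have htV : t ∈ (Vᶜ : Set X) := fun htVmem => by
          have : t ∈ U ∩ V := ⟨htU, htVmem⟩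
          rw [hdisj] at this
          exact this
        rcases habsub htV with h | h
        · exact absurd h hta
        · exact ⟨h, htV⟩
    have hMclopen : IsClopen (cb ∩ Vᶜ) := by
      constructor
      · exact hbcl.inter (isClosed_compl_iff.mpr hV)
      · rw [hM]
        exact hU.inter hacl.isOpen_compl
    rcases isClopen_iff.mp hMclopen with h | h
    · intro t htV
      rcases habsub htV with hta | htb
      · exact hta
      · exfalso
        have : t ∈ cb ∩ Vᶜ := ⟨htb, htV⟩
        rw [h] at this
        exact this
    · exfalso
      have : w ∈ cb ∩ Vᶜ := h ▸ mem_univ w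
      exact hab.ne_of_mem hwa this.1 rfl
  rcases hsub hwVc with hw1 | hw2
  · exact Or.inl (key c1 c2 h1cl h2cl hsub hdisj2 hw1)
  · exact Or.inr (key c2 c1 h2cl h1cl (by rwa [union_comm]) hdisj2.symm hw2)

/-- A limit of points lying frequently in a convergent sequence of compacts lies in the limit. -/
lemma mem_limit_of_frequently {S : ℕ → NonemptyCompacts X} {T : NonemptyCompacts X}
    (hconv : Tendsto S atTop (𝓝 T)) {u : ℕ → X} {x : X} (hx : Tendsto u atTop (𝓝 x))
    (hu : ∃ᶠ j in atTop, u j ∈ (S j : Set X)) : x ∈ (T : Set X) := by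
  rw [← T.isCompact.isClosed.closure_eq, EMetric.mem_closure_iff]
  intro ε hε
  have hε2 : (0 : ℝ≥0∞) < ε / 2 := ENNReal.half_pos hε.ne'
  have h1 : ∀ᶠ j in atTop, edist (S j) T < ε / 2 :=
    eventually_atTop.mpr ((EMetric.tendsto_atTop.mp hconv) (ε / 2) hε2)
  have h2 : ∀ᶠ j in atTop, edist (u j) x < ε / 2 :=
    eventually_atTop.mpr ((EMetric.tendsto_atTop.mp hx) (ε / 2) hε2)
  obtain ⟨j, hju, hj1, hj2⟩ := (hu.and_eventually (h1.and h2)).exists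
  obtain ⟨y, hyT, hy⟩ := exists_edist_lt_of_hausdorffEdist_lt hju hj1
  refine ⟨y, hyT, ?_⟩
  calc edist x y ≤ edist x (u j) + edist (u j) y := edist_triangle _ _ _
    _ < ε / 2 + ε / 2 := by
        apply ENNReal.add_lt_add _ hy
        rwa [edist_comm]
    _ = ε := ENNReal.add_halves _

/-- Points of the limit are eventually approximated by points of the sequence. -/
lemma approx_of_mem_limit {S : ℕ → NonemptyCompacts X} {T : NonemptyCompacts X}
    (hconv : Tendsto S atTop (𝓝 T)) {x : X} (hx : x ∈ (T : Set X)) {ε : ℝ≥0∞} (hε : 0 < ε) :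
    ∀ᶠ j in atTop, ∃ y ∈ (S j : Set X), edist x y < ε := by
  filter_upwards [eventually_atTop.mpr ((EMetric.tendsto_atTop.mp hconv) ε hε)] with j hj
  have hj' : hausdorffEDist (T : Set X) (S j : Set X) < ε := by
    rw [hausdorffEDist_comm]
    exact hj
  exact exists_edist_lt_of_hausdorffEdist_lt hx hj'

/-- A Hausdorff limit of preconnected compacts is preconnected. -/
lemma isPreconnected_limit {S : ℕ → NonemptyCompacts X} {T : NonemptyCompacts X}
    (hconv : Tendsto S atTop (𝓝 T)) (hS : ∀ j, IsPreconnected (S j : Set X)) :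
    IsPreconnected (T : Set X) := by
  rw [isPreconnected_iff_subset_of_fully_disjoint_closed T.isCompact.isClosed]
  intro c1 c2 h1cl h2cl hsub hdisj
  by_contra hcon
  push_neg at hcon
  obtain ⟨hn1, hn2⟩ := hcon
  obtain ⟨x1, hx1T, hx1⟩ := not_subset.mp hn1
  obtain ⟨x2, hx2T, hx2⟩ := not_subset.mp hn2
  have hx1c : x1 ∈ (T : Set X) ∩ c2 := ⟨hx1T, (hsub hx1T).resolve_left hx1⟩
  have hx2c : x2 ∈ (T : Set X) ∩ c1 := ⟨hx2T, (hsub hx2T).resolve_right hx2⟩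
  set A : Set X := (T : Set X) ∩ c1 with hA
  set B : Set X := (T : Set X) ∩ c2 with hB
  have hAcp : IsCompact A := T.isCompact.inter_right h1cl
  have hBcl : IsClosed B := T.isCompact.isClosed.inter h2cl
  have hABdisj : Disjoint A B := by
    apply Set.disjoint_left.mpr
    rintro t ⟨-, ht1⟩ ⟨-, ht2⟩
    exact hdisj.ne_of_mem ht1 ht2 rfl
  obtain ⟨δ, hδ, hdisjth⟩ := hABdisj.exists_thickenings hAcp hBcl
  have hδ' : (0 : ℝ≥0∞) < ENNReal.ofReal δ := ENNReal.ofReal_pos.mpr hδ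
  obtain ⟨j, hj⟩ := (eventually_atTop.mpr ((EMetric.tendsto_atTop.mp hconv) _ hδ')).exists
  have hTsub : (T : Set X) ⊆ A ∪ B := by
    intro t ht
    rcases hsub ht with h | h
    · exact Or.inl ⟨ht, h⟩
    · exact Or.inr ⟨ht, h⟩
  have hScover : (S j : Set X) ⊆ thickening δ A ∪ thickening δ B := by
    intro y hy
    have hj' : hausdorffEdist (S j : Set X) (T : Set X) < ENNReal.ofReal δ := hj
    obtain ⟨t, htT, hyt⟩ := exists_edist_lt_of_hausdorffEdist_lt hy hj'
    have hd : dist y t < δ := by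
      rw [← edist_lt_ofReal]
      exact hyt
    rcases hTsub htT with h | h
    · exact Or.inl (mem_thickening_iff.mpr ⟨t, h, hd⟩)
    · exact Or.inr (mem_thickening_iff.mpr ⟨t, h, hd⟩)
  have hmem : ∀ {t : X}, t ∈ (T : Set X) → ∃ y ∈ (S j : Set X), dist y t < δ := by
    intro t ht
    have hj' : hausdorffEDist (T : Set X) (S j : Set X) < ENNReal.ofReal δ := by
      rw [hausdorffEDist_comm]
      exact hj
    obtain ⟨y, hyS, hty⟩ := exists_edist_lt_of_hausdorffEdist_lt ht hj'
    refine ⟨y, hyS, ?_⟩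
    rw [dist_comm, ← edist_lt_ofReal]
    exact hty
  obtain ⟨y1, hy1S, hy1d⟩ := hmem hx2c.1
  obtain ⟨y2, hy2S, hy2d⟩ := hmem hx1c.1
  have hne1 : ((S j : Set X) ∩ thickening δ A).Nonempty :=
    ⟨y1, hy1S, mem_thickening_iff.mpr ⟨x2, hx2c, hy1d⟩⟩
  have hne2 : ((S j : Set X) ∩ thickening δ B).Nonempty :=
    ⟨y2, hy2S, mem_thickening_iff.mpr ⟨x1, hx1c, hy2d⟩⟩
  obtain ⟨w, -, hw⟩ := hS j (thickening δ A) (thickening δ B) isOpen_thickening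
    isOpen_thickening hScover hne1 hne2
  exact hdisjth.ne_of_mem hw.1 hw.2 rfl

/-- MAIN: an endpoint is not in the closure of the δ-fat cut points. -/
lemma not_mem_closure_fatCut
    (hsep : ∀ x y : X, x ≠ y → ∃ z : X, z ≠ x ∧ z ≠ y ∧
      connectedComponentIn ({z}ᶜ : Set X) x ≠ connectedComponentIn ({z}ᶜ : Set X) y)
    {δ : ℝ} (hδ : 0 < δ) {p : X} (hp : IsPreconnected ({p}ᶜ : Set X)) :
    p ∉ closure (fatCut X δ) := by
  -- p is not itself a fat cut point
  have hpF : p ∉ fatCut X δ := by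
    rintro ⟨U, V, hU, hV, hdisj, hcover, ⟨a, haU, had⟩, ⟨b, hbV, hbd⟩⟩
    have hane : a ≠ p := by
      have : (0:ℝ) < dist a p := lt_of_lt_of_le hδ had
      exact dist_pos.mp this
    have hbne : b ≠ p := by
      have : (0:ℝ) < dist b p := lt_of_lt_of_le hδ hbd
      exact dist_pos.mp this
    obtain ⟨t, htp, ht⟩ := hp U V hU hV (le_of_eq hcover.symm)
      ⟨a, hane, haU⟩ ⟨b, hbne, hbV⟩
    rw [hdisj] at ht
    exact ht
  intro hclp
  obtain ⟨f, hfF, hft⟩ := mem_closure_iff_seq_limit.mp hclp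
  have hfp : ∀ k, f k ≠ p := fun k h => hpF (h ▸ hfF k)
  -- oriented per-k data
  have hdata : ∀ k, ∃ (K L : Set X) (a b : X),
      IsClosed K ∧ IsPreconnected K ∧ IsClosed L ∧ IsPreconnected L ∧
      K ∪ L = univ ∧ K ∩ L = {f k} ∧ p ∈ K ∧
      a ∈ K ∧ b ∈ L ∧ δ ≤ dist a (f k) ∧ δ ≤ dist b (f k) := by
    intro k
    obtain ⟨U, V, hU, hV, hdisj, hcover, ⟨a, haU, had⟩, ⟨b, hbV, hbd⟩⟩ := hfF k
    have haV : a ∉ V := fun h => by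
      have : a ∈ U ∩ V := ⟨haU, h⟩
      rw [hdisj] at this
      exact this
    have hbU : b ∉ U := fun h => by
      have : b ∈ U ∩ V := ⟨h, hbV⟩
      rw [hdisj] at this
      exact this
    have hKL1 : (Vᶜ : Set X) ∪ (Uᶜ : Set X) = univ := by
      rw [← compl_inter, inter_comm, hdisj, compl_empty]
    have hKL2 : (Vᶜ : Set X) ∩ (Uᶜ : Set X) = {f k} := by
      rw [← compl_union, union_comm, hcover, compl_compl]
    have hpUV : p ∈ U ∪ V := by
      rw [hcover]
      exact fun h => hfp k (mem_singleton_iff.mp h).symm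
    rcases hpUV with hpU | hpV
    · refine ⟨Vᶜ, Uᶜ, a, b, isClosed_compl_iff.mpr hV,
        isPreconnected_compl_side hU hV hdisj hcover, isClosed_compl_iff.mpr hU,
        isPreconnected_compl_side hV hU (by rwa [inter_comm]) (by rwa [union_comm]),
        hKL1, hKL2, fun h => by
          have : p ∈ U ∩ V := ⟨hpU, h⟩
          rw [hdisj] at this
          exact this,
        haV, hbU, had, hbd⟩
    · refine ⟨Uᶜ, Vᶜ, b, a, isClosed_compl_iff.mpr hU,
        isPreconnected_compl_side hV hU (by rwa [inter_comm]) (by rwa [union_comm]),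
        isClosed_compl_iff.mpr hV, isPreconnected_compl_side hU hV hdisj hcover,
        by rwa [union_comm] at hKL1, by rwa [inter_comm] at hKL2, fun h => by
          have : p ∈ U ∩ V := ⟨h, hpV⟩
          rw [hdisj] at this
          exact this,
        hbU, haV, hbd, had⟩
  choose K L a b hKcl hKpc hLcl hLpc huniv hinter hpK haK hbL had hbd using hdata
  have hfL : ∀ k, f k ∈ L k := by
    intro k
    have : f k ∈ K k ∩ L k := by
      rw [hinter k]
      rfl
    exact this.2
  -- hyperspace sequence
  set 𝒦 : ℕ → NonemptyCompacts X := fun k => ⟨⟨K k, (hKcl k).isCompact⟩, ⟨p, hpK k⟩⟩ with h𝒦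
  set 𝓛 : ℕ → NonemptyCompacts X := fun k => ⟨⟨L k, (hLcl k).isCompact⟩, ⟨f k, hfL k⟩⟩ with h𝓛
  obtain ⟨lim, -, φ, hφmono, hφconv⟩ := IsCompact.tendsto_subseq
    (isCompact_univ : IsCompact (univ : Set
      (NonemptyCompacts X × NonemptyCompacts X × X × X)))
    (x := fun k => (𝒦 k, 𝓛 k, a k, b k)) (fun k => mem_univ _)
  obtain ⟨T₁, T₂, A, B⟩ := lim
  have hconvK : Tendsto (fun j => 𝒦 (φ j)) atTop (𝓝 T₁) :=
    ((continuous_fst.tendsto _).comp hφconv : _)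
  have hconvL : Tendsto (fun j => 𝓛 (φ j)) atTop (𝓝 T₂) :=
    ((continuous_fst.tendsto _).comp ((continuous_snd.tendsto _).comp hφconv) : _)
  have hconvA : Tendsto (fun j => a (φ j)) atTop (𝓝 A) :=
    ((continuous_fst.tendsto _).comp
      ((continuous_snd.tendsto _).comp ((continuous_snd.tendsto _).comp hφconv)) : _)
  have hconvB : Tendsto (fun j => b (φ j)) atTop (𝓝 B) :=
    ((continuous_snd.tendsto _).comp
      ((continuous_snd.tendsto _).comp ((continuous_snd.tendsto _).comp hφconv)) : _)
  set g : ℕ → X := fun j => f (φ j) with hg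
  have hgp : Tendsto g atTop (𝓝 p) := hft.comp hφmono.tendsto_atTop
  set KK : Set X := (T₁ : Set X) with hKK
  set LL : Set X := (T₂ : Set X) with hLL
  have hKKpc : IsPreconnected KK := isPreconnected_limit hconvK (fun j => hKpc (φ j))
  have hLLpc : IsPreconnected LL := isPreconnected_limit hconvL (fun j => hLpc (φ j))
  have hpKK : p ∈ KK := mem_limit_of_frequently hconvK tendsto_const_nhds
    ((Eventually.of_forall (fun j => hpK (φ j))).frequently)
  have hpLL : p ∈ LL := mem_limit_of_frequently hconvL hgp
    ((Eventually.of_forall (fun j => hfL (φ j))).frequently)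
  have hAK : A ∈ KK := mem_limit_of_frequently hconvK hconvA
    ((Eventually.of_forall (fun j => haK (φ j))).frequently)
  have hBL : B ∈ LL := mem_limit_of_frequently hconvL hconvB
    ((Eventually.of_forall (fun j => hbL (φ j))).frequently)
  have hAd : δ ≤ dist A p :=
    ge_of_tendsto (hconvA.dist hgp) (Eventually.of_forall (fun j => had (φ j)))
  have hBd : δ ≤ dist B p :=
    ge_of_tendsto (hconvB.dist hgp) (Eventually.of_forall (fun j => hbd (φ j)))
  have hKLuniv : KK ∪ LL = univ := by
    rw [eq_univ_iff_forall]
    intro x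
    have hx : ∀ j : ℕ, x ∈ K (φ j) ∨ x ∈ L (φ j) := by
      intro j
      have : x ∈ K (φ j) ∪ L (φ j) := by
        rw [huniv (φ j)]
        exact mem_univ x
      exact this
    have hx' : ∃ᶠ j in (atTop : Filter ℕ), (x ∈ K (φ j) ∨ x ∈ L (φ j)) :=
      Frequently.of_forall hx
    rcases frequently_or_distrib.mp hx' with h | h
    · exact Or.inl (mem_limit_of_frequently hconvK tendsto_const_nhds h)
    · exact Or.inr (mem_limit_of_frequently hconvL tendsto_const_nhds h)
  -- a second common point q₀ ≠ p
  have hq : ∃ q₀, (q₀ ∈ KK ∧ q₀ ∈ LL) ∧ q₀ ≠ p := by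
    by_contra hcon
    push_neg at hcon
    have hAp : A ≠ p := dist_pos.mp (lt_of_lt_of_le hδ hAd)
    have hBp : B ≠ p := dist_pos.mp (lt_of_lt_of_le hδ hBd)
    have hALL : A ∉ LL := fun h => hAp (hcon A ⟨hAK, h⟩)
    have hBKK : B ∉ KK := fun h => hBp (hcon B ⟨h, hBL⟩)
    obtain ⟨t, htp, htL, htK⟩ := hp (LLᶜ) (KKᶜ)
      (T₂.isCompact.isClosed.isOpen_compl) (T₁.isCompact.isClosed.isOpen_compl)
      (fun x hx => by
        by_cases h1 : x ∈ LL
        · by_cases h2 : x ∈ KK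
          · exact absurd (hcon x ⟨h2, h1⟩) hx
          · exact Or.inr h2
        · exact Or.inl h1)
      ⟨A, hAp, hALL⟩ ⟨B, hBp, hBKK⟩
    have : t ∈ KK ∪ LL := by
      rw [hKLuniv]
      exact mem_univ t
    rcases this with h | h
    · exact htK h
    · exact htL h
  obtain ⟨q₀, ⟨hqK, hqL⟩, hqp⟩ := hq
  obtain ⟨z, hzp, hzq, hzcomp⟩ := hsep p q₀ (Ne.symm hqp)
  have hpz : p ≠ z := Ne.symm hzp
  have hpO : p ∈ ({z}ᶜ : Set X) := hpz
  have hqO : q₀ ∈ ({z}ᶜ : Set X) := Ne.symm hzq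
  have hgz : ∀ᶠ j in atTop, g j ≠ z := by
    have h0 : ∀ᶠ j in atTop, g j ∈ ({z}ᶜ : Set X) :=
      hgp (isOpen_compl_singleton.mem_nhds hpO)
    exact h0.mono fun j hj => hj
  by_cases hcase : ∃ᶠ j in atTop, z ∉ K (φ j)
  · -- CASE A
    have hq₀cl : q₀ ∈ closure (connectedComponentIn ({z}ᶜ : Set X) p) := by
      rw [EMetric.mem_closure_iff]
      intro ε hε
      obtain ⟨j, hjz, ⟨y, hyK, hyd⟩⟩ :=
        (hcase.and_eventually (approx_of_mem_limit hconvK hqK hε)).exists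
      refine ⟨y, ?_, hyd⟩
      have hKO : K (φ j) ⊆ ({z}ᶜ : Set X) := fun u hu h => hjz (by
        rw [mem_singleton_iff] at h
        exact h ▸ hu)
      exact (hKpc (φ j)).subset_connectedComponentIn (hpK (φ j)) hKO hyK
    have hq₀mem : q₀ ∈ connectedComponentIn ({z}ᶜ : Set X) p := by
      rcases closure_connectedComponentIn_subset z p hq₀cl with h | h
      · exact h
      · exact absurd (mem_singleton_iff.mp h) (Ne.symm hzq)
    exact hzcomp (connectedComponentIn_eq hq₀mem)
  · -- CASE B
    rw [Filter.not_frequently] at hcase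
    have hzK : ∀ᶠ j in atTop, z ∈ K (φ j) := hcase.mono fun j hj => not_not.mp hj
    have hzL : ∀ᶠ j in atTop, z ∉ L (φ j) := by
      filter_upwards [hzK, hgz] with j h1 h2
      intro hzLj
      have : z ∈ K (φ j) ∩ L (φ j) := ⟨h1, hzLj⟩
      rw [hinter (φ j)] at this
      exact h2 (mem_singleton_iff.mp this).symm
    by_cases hB1 : ∃ C : Set X, ∃ᶠ j in atTop,
        (z ∉ L (φ j) ∧ g j ≠ z ∧ connectedComponentIn ({z}ᶜ : Set X) (g j) = C)
    · obtain ⟨C, hC⟩ := hB1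
      obtain ⟨j₀, hj₀L, hj₀z, hj₀eq⟩ := hC.exists
      subst hj₀eq
      -- p in the closure of this component
      have hpcl : p ∈ closure (connectedComponentIn ({z}ᶜ : Set X) (g j₀)) := by
        rw [EMetric.mem_closure_iff]
        intro ε hε
        obtain ⟨j, ⟨h1, h2, h3⟩, h4⟩ := (hC.and_eventually
          (eventually_atTop.mpr ((EMetric.tendsto_atTop.mp hgp) ε hε))).exists
        refine ⟨g j, ?_, by rwa [edist_comm]⟩
        rw [← h3]
        exact mem_connectedComponentIn (show g j ∈ ({z}ᶜ : Set X) from h2)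
      have hpmem : p ∈ connectedComponentIn ({z}ᶜ : Set X) (g j₀) := by
        rcases closure_connectedComponentIn_subset z (g j₀) hpcl with h | h
        · exact h
        · exact absurd (mem_singleton_iff.mp h) hpz
      -- q₀ in the closure of this component
      have hqcl : q₀ ∈ closure (connectedComponentIn ({z}ᶜ : Set X) (g j₀)) := by
        rw [EMetric.mem_closure_iff]
        intro ε hε
        obtain ⟨j, ⟨h1, h2, h3⟩, ⟨y, hyL, hyd⟩⟩ := (hC.and_eventually
          (approx_of_mem_limit hconvL hqL hε)).exists
        refine ⟨y, ?_, hyd⟩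
        rw [← h3]
        have hLO : L (φ j) ⊆ ({z}ᶜ : Set X) := fun u hu h => h1 (by
          rw [mem_singleton_iff] at h
          exact h ▸ hu)
        exact (hLpc (φ j)).subset_connectedComponentIn (hfL (φ j)) hLO hyL
      have hqmem : q₀ ∈ connectedComponentIn ({z}ᶜ : Set X) (g j₀) := by
        rcases closure_connectedComponentIn_subset z (g j₀) hqcl with h | h
        · exact h
        · exact absurd (mem_singleton_iff.mp h) (Ne.symm hzq)
      exact hzcomp ((connectedComponentIn_eq hpmem).symm.trans (connectedComponentIn_eq hqmem))
    · -- CASE B2 : apply no_comp_cluster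
      push_neg at hB1
      refine no_comp_cluster hsep hpz ?_
      intro C
      rw [EMetric.mem_closure_iff]
      intro ε hε
      have h1 := hB1 C
      replace h1 : ∀ᶠ j in atTop, ¬(z ∉ L (φ j) ∧ g j ≠ z ∧
          connectedComponentIn ({z}ᶜ : Set X) (g j) = C) :=
        h1.mono fun j hj h => hj h.1 h.2.1 h.2.2
      obtain ⟨j, ⟨⟨hj1, hj2⟩, hj3⟩, hj4⟩ := (((hzL.and hgz).and h1).and
        (eventually_atTop.mpr ((EMetric.tendsto_atTop.mp hgp) ε hε))).exists
      have hne : connectedComponentIn ({z}ᶜ : Set X) (g j) ≠ C := fun h => hj3 ⟨hj1, hj2, h⟩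
      exact ⟨g j, ⟨hj2, hne⟩, by rwa [edist_comm]⟩

end DendriteAux

/-- If the endpoints of a dendrite are dense, then they form a residual set. -/
theorem stmt0 {D : Type*} [MetricSpace D] [CompactSpace D] [ConnectedSpace D]
    (hD : IsDendrite D) (hdense : Dense {p : D | IsEndpointOf D p}) :
    {p : D | IsEndpointOf D p} ∈ residual D := by
  obtain ⟨-, hsep⟩ := hD
  have hmeagre : IsMeagre ({p : D | IsEndpointOf D p}ᶜ) := by
    rw [isMeagre_iff_countable_union_isNowhereDense]
    refine ⟨Set.range (fun n : ℕ => closure (fatCut D (1 / (n + 1)))), ?_, countable_range _, ?_⟩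
    · rintro t ⟨n, rfl⟩
      have hpos : (0 : ℝ) < 1 / (n + 1) := by positivity
      have hsub : closure (fatCut D (1 / (n + 1))) ⊆ {p : D | IsEndpointOf D p}ᶜ := by
        intro q hq hqE
        exact not_mem_closure_fatCut hsep hpos hqE hq
      show IsNowhereDense _
      unfold IsNowhereDense
      rw [closure_closure]
      have h2 : interior (closure (fatCut D (1 / (n + 1)))) ⊆
          interior ({p : D | IsEndpointOf D p}ᶜ) := interior_mono hsub
      rw [interior_compl, hdense.closure_eq, compl_univ] at h2
      exact eq_empty_of_subset_empty h2
    · intro q hq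
      have hnp : ¬ IsPreconnected ({q}ᶜ : Set D) := hq
      unfold IsPreconnected at hnp
      push_neg at hnp
      obtain ⟨u, v, hu, hv, hsub, ⟨a, haQ, hau⟩, ⟨b, hbQ, hbv⟩, hne⟩ := hnp
      have hane : a ≠ q := haQ
      have hbne : b ≠ q := hbQ
      have hdmin : (0:ℝ) < min (dist a q) (dist b q) :=
        lt_min (dist_pos.mpr hane) (dist_pos.mpr hbne)
      obtain ⟨n, hn⟩ := exists_nat_one_div_lt hdmin
      refine ⟨closure (fatCut D (1 / (n + 1))), ⟨n, rfl⟩, subset_closure ?_⟩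
      refine ⟨u ∩ {q}ᶜ, v ∩ {q}ᶜ, hu.inter isOpen_compl_singleton,
        hv.inter isOpen_compl_singleton, ?_, ?_, ⟨a, ⟨hau, haQ⟩, ?_⟩, ⟨b, ⟨hbv, hbQ⟩, ?_⟩⟩
      · rw [eq_empty_iff_forall_notMem]
        rintro t ⟨⟨htu, htQ⟩, ⟨htv, -⟩⟩
        have hmem : t ∈ ({q}ᶜ : Set D) ∩ (u ∩ v) := ⟨htQ, htu, htv⟩
        rw [hne] at hmem
        exact hmem
      · apply Subset.antisymm
        · rintro t (⟨-, h⟩ | ⟨-, h⟩) <;> exact h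
        · intro t ht
          rcases hsub ht with h | h
          · exact Or.inl ⟨h, ht⟩
          · exact Or.inr ⟨h, ht⟩
      · exact le_of_lt (lt_of_lt_of_le hn (min_le_left _ _))
      · exact le_of_lt (lt_of_lt_of_le hn (min_le_right _ _))
  rw [IsMeagre, compl_compl] at hmeagre
  exact hmeagre
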